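/- Under the Hopf–Lax hypotheses, any ε-optimizer for the dynamic programming principle is small: fix 0 < t < t+h < T, μ ∈ 𝒫₂(ℝ^d), ε > 0, and let ξ ∈ 𝒫_{2,μ}(ℝ^{2d}) satisfy 𝒱(t+h, exp_μ(ξ)) + h ℒ(ξ/h) ≤ 𝒱(t,μ) + ε. Then there exists a constant C' > 0, depending only on Lip(𝒢; W₂) and the coercivity parameters c, C of L, such that ‖ξ‖_μ ≤ C'(h + √(εh)). -/

import Mathlib

open MeasureTheory Set Filter Metric
open scoped Topology ENNReal NNReal

noncomputable section

abbrev E (d : ℕ) : Type := EuclideanSpace ℝ (Fin d)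

/-- Real inner product. -/
def rinner {d : ℕ} (x y : E d) : ℝ := inner ℝ x y

/-- The second moment of a measure. -/
def secondMoment {d : ℕ} (μ : Measure (E d)) : ℝ := ∫ x, ‖x‖ ^ 2 ∂μ

/-- `γ` is a coupling of `μ` and `ν`. -/
def IsCoupling {d : ℕ} (γ : Measure (E d × E d)) (μ ν : Measure (E d)) : Prop :=
  γ.map Prod.fst = μ ∧ γ.map Prod.snd = ν

/-- The 2-Wasserstein distance. -/
def W2 {d : ℕ} (μ ν : Measure (E d)) : ℝ :=
  sInf {c | ∃ γ : Measure (E d × E d), IsProbabilityMeasure γ ∧ IsCoupling γ μ ν ∧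
    c = Real.sqrt (∫ p, ‖p.1 - p.2‖ ^ 2 ∂γ)}

/-- Probability measures with finite second moment. -/
def P2 (d : ℕ) : Set (Measure (E d)) :=
  {μ | IsProbabilityMeasure μ ∧ Integrable (fun x => ‖x‖ ^ 2) μ}

/-- Plans (velocity plans) with first marginal `μ` and finite second moment. -/
def plans {d : ℕ} (μ : Measure (E d)) : Set (Measure (E d × E d)) :=
  {γ | IsProbabilityMeasure γ ∧ γ.map Prod.fst = μ ∧
    Integrable (fun p => ‖p.1‖ ^ 2 + ‖p.2‖ ^ 2) γ}

/-- The Wasserstein norm of a plan: `‖γ‖_μ = (∫ |z|² dγ(x,z))^{1/2}`. -/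
def plNorm {d : ℕ} (γ : Measure (E d × E d)) : ℝ := Real.sqrt (∫ p, ‖p.2‖ ^ 2 ∂γ)

/-- The exponential map `exp_μ(γ) = (π₁ + π₂)_# γ`. -/
def expMap {d : ℕ} (γ : Measure (E d × E d)) : Measure (E d) :=
  γ.map (fun p => p.1 + p.2)

/-- Rescaling of a plan in the second coordinate: `λ·γ = (π₁, λπ₂)_# γ`. -/
def scal {d : ℕ} (lam : ℝ) (γ : Measure (E d × E d)) : Measure (E d × E d) :=
  γ.map (fun p => (p.1, lam • p.2))

/-- Couplings of two plans along their common first marginal. -/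
def GammaMu {d : ℕ} (γ₁ γ₂ : Measure (E d × E d)) : Set (Measure (E d × E d × E d)) :=
  {θ | IsProbabilityMeasure θ ∧ θ.map (fun q => (q.1, q.2.1)) = γ₁ ∧
    θ.map (fun q => (q.1, q.2.2)) = γ₂}

/-- The relaxed Lagrangian `ℒ(γ) = ∫ L(v) dγ(x,v)`. -/
def Lag {d : ℕ} (L : E d → ℝ) (γ : Measure (E d × E d)) : ℝ := ∫ p, L p.2 ∂γ

/-- The Hopf-Lax function. -/
def HL {d : ℕ} (G : Measure (E d) → ℝ) (L : E d → ℝ) (T t : ℝ) (μ : Measure (E d)) : ℝ :=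
  sInf {r | ∃ γ ∈ plans μ, r = G (expMap γ) + (T - t) * Lag L (scal (T - t)⁻¹ γ)}

/-! ### Auxiliary lemmas -/

open scoped ProbabilityTheory

section Aux

variable {d : ℕ}

lemma plNorm_nonneg (γ : Measure (E d × E d)) : 0 ≤ plNorm γ := Real.sqrt_nonneg _

lemma plNorm_sq (γ : Measure (E d × E d)) : plNorm γ ^ 2 = ∫ p, ‖p.2‖ ^ 2 ∂γ :=
  Real.sq_sqrt (integral_nonneg fun _ => sq_nonneg _)

lemma integrable_sq_snd {μ : Measure (E d)} {γ : Measure (E d × E d)} (hγ : γ ∈ plans μ) :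
    Integrable (fun p : E d × E d => ‖p.2‖ ^ 2) γ := by
  refine hγ.2.2.mono' ((continuous_snd.norm.pow 2).aestronglyMeasurable) ?_
  filter_upwards with p
  rw [Real.norm_eq_abs, abs_of_nonneg (sq_nonneg _)]
  nlinarith [sq_nonneg ‖p.1‖]

lemma abs_L_le {L : E d → ℝ} {c C C₂ : ℝ} (hc : 0 < c) (hC : 0 < C) (hC₂ : 0 < C₂)
    (hcoer : ∀ z : E d, c * ‖z‖ ^ 2 - C ≤ L z) (hq : ∀ z : E d, L z ≤ C₂ * (1 + ‖z‖ ^ 2)) :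
    ∀ z : E d, |L z| ≤ (C₂ + C) * (1 + ‖z‖ ^ 2) := by
  intro z
  rw [abs_le]
  constructor
  · nlinarith [sq_nonneg ‖z‖, hcoer z]
  · nlinarith [sq_nonneg ‖z‖, hq z]

lemma integrable_L_smul {L : E d → ℝ} (hLc : Continuous L) {c C C₂ : ℝ} (hc : 0 < c) (hC : 0 < C)
    (hC₂ : 0 < C₂) (hcoer : ∀ z : E d, c * ‖z‖ ^ 2 - C ≤ L z)
    (hq : ∀ z : E d, L z ≤ C₂ * (1 + ‖z‖ ^ 2)) (a : ℝ) {μ : Measure (E d)}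
    {γ : Measure (E d × E d)} (hγ : γ ∈ plans μ) :
    Integrable (fun p : E d × E d => L (a • p.2)) γ := by
  haveI := hγ.1
  have hb : Integrable (fun p : E d × E d => (C₂ + C) * (1 + a ^ 2 * ‖p.2‖ ^ 2)) γ :=
    (((integrable_const (1 : ℝ)).add ((integrable_sq_snd hγ).const_mul (a ^ 2))).const_mul (C₂ + C))
  refine hb.mono' ((hLc.comp (by fun_prop : Continuous fun p : E d × E d => a • p.2)).aestronglyMeasurable) ?_
  filter_upwards with p
  rw [Real.norm_eq_abs]
  have h1 := abs_L_le hc hC hC₂ hcoer hq (a • p.2)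
  have h2 : ‖a • p.2‖ ^ 2 = a ^ 2 * ‖p.2‖ ^ 2 := by
    rw [norm_smul, mul_pow, Real.norm_eq_abs, sq_abs]
  rw [h2] at h1
  exact h1

lemma Lag_scal {L : E d → ℝ} (hLc : Continuous L) (a : ℝ) (γ : Measure (E d × E d)) :
    Lag L (scal a γ) = ∫ p, L (a • p.2) ∂γ := by
  have hA : AEStronglyMeasurable (fun p : E d × E d => L p.2)
      (γ.map (fun p => (p.1, a • p.2))) := (hLc.comp continuous_snd).aestronglyMeasurable
  unfold Lag scal
  rw [integral_map (by fun_prop) hA]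

lemma Lag_scal_snd {L : E d → ℝ} (hLc : Continuous L) (a : ℝ) (γ : Measure (E d × E d)) :
    Lag L (scal a γ) = ∫ z, L (a • z) ∂(γ.map Prod.snd) := by
  have hA : AEStronglyMeasurable (fun z : E d => L (a • z)) (γ.map Prod.snd) :=
    (hLc.comp (by fun_prop : Continuous fun z : E d => a • z)).aestronglyMeasurable
  rw [Lag_scal hLc, integral_map measurable_snd.aemeasurable hA]

lemma Lag_scal_congr {L : E d → ℝ} (hLc : Continuous L) (a : ℝ) {γ γ' : Measure (E d × E d)}
    (h : γ'.map Prod.snd = γ.map Prod.snd) : Lag L (scal a γ') = Lag L (scal a γ) := by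
  rw [Lag_scal_snd hLc, Lag_scal_snd hLc, h]

lemma W2_le_cost {μ ν : Measure (E d)} (PP : Measure (E d × E d)) (hP : IsProbabilityMeasure PP)
    (hcpl : IsCoupling PP μ ν) : W2 μ ν ≤ Real.sqrt (∫ p, ‖p.1 - p.2‖ ^ 2 ∂PP) := by
  apply csInf_le
  · refine ⟨0, ?_⟩
    rintro x ⟨γ, -, -, rfl⟩
    exact Real.sqrt_nonneg _
  · exact ⟨PP, hP, hcpl, rfl⟩

lemma W2_le_plNorm {μ : Measure (E d)} {γ : Measure (E d × E d)} (hp : IsProbabilityMeasure γ)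
    (hfst : γ.map Prod.fst = μ) : W2 μ (expMap γ) ≤ plNorm γ := by
  haveI := hp
  set f : E d × E d → E d × E d := fun p => (p.1, p.1 + p.2) with hf
  have hfm : Measurable f := by fun_prop
  have h1 : (γ.map f).map Prod.fst = μ := by
    rw [Measure.map_map measurable_fst hfm]; exact hfst
  have h2 : (γ.map f).map Prod.snd = expMap γ := by
    rw [Measure.map_map measurable_snd hfm]; rfl
  have hcost : ∫ p, ‖p.1 - p.2‖ ^ 2 ∂(γ.map f) = ∫ p, ‖p.2‖ ^ 2 ∂γ := by
    have hA : AEStronglyMeasurable (fun p : E d × E d => ‖p.1 - p.2‖ ^ 2) (γ.map f) :=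
      ((continuous_fst.sub continuous_snd).norm.pow 2).aestronglyMeasurable
    rw [integral_map hfm.aemeasurable hA]
    refine integral_congr_ae (Filter.Eventually.of_forall fun p => ?_)
    show ‖(f p).1 - (f p).2‖ ^ 2 = ‖p.2‖ ^ 2
    have : (f p).1 - (f p).2 = -p.2 := by simp [hf]
    rw [this, norm_neg]
  calc W2 μ (expMap γ) ≤ Real.sqrt (∫ p, ‖p.1 - p.2‖ ^ 2 ∂(γ.map f)) :=
        W2_le_cost _ (Measure.isProbabilityMeasure_map hfm.aemeasurable) ⟨h1, h2⟩
    _ = plNorm γ := by rw [hcost]; rfl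

lemma expMap_mem_P2 {μ : Measure (E d)} {γ : Measure (E d × E d)} (hγ : γ ∈ plans μ) :
    expMap γ ∈ P2 d := by
  obtain ⟨hp, hfst, hint⟩ := hγ
  haveI := hp
  have hm : Measurable (fun p : E d × E d => p.1 + p.2) := measurable_fst.add measurable_snd
  refine ⟨Measure.isProbabilityMeasure_map hm.aemeasurable, ?_⟩
  rw [expMap, integrable_map_measure ((by fun_prop : Continuous fun x : E d => ‖x‖ ^ 2).aestronglyMeasurable)
    hm.aemeasurable]
  refine (hint.const_mul 2).mono' ?_ ?_
  · exact ((continuous_fst.add continuous_snd).norm.pow 2).aestronglyMeasurable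
  · filter_upwards with p
    have h1 : ‖p.1 + p.2‖ ≤ ‖p.1‖ + ‖p.2‖ := norm_add_le _ _
    have h2 : ‖p.1 + p.2‖ ^ 2 ≤ (‖p.1‖ + ‖p.2‖) ^ 2 :=
      pow_le_pow_left₀ (norm_nonneg _) h1 2
    rw [Function.comp_apply, Real.norm_eq_abs, abs_of_nonneg (sq_nonneg _)]
    nlinarith [h2, sq_nonneg (‖p.1‖ - ‖p.2‖)]

/-- The zero plan. -/
lemma zero_plan_mem {μ : Measure (E d)} (hμ : μ ∈ P2 d) :
    μ.map (fun x => (x, (0 : E d))) ∈ plans μ := by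
  haveI := hμ.1
  have hm : Measurable (fun x : E d => (x, (0 : E d))) := by fun_prop
  refine ⟨Measure.isProbabilityMeasure_map hm.aemeasurable, ?_, ?_⟩
  · rw [Measure.map_map measurable_fst hm]
    exact Measure.map_id
  · rw [integrable_map_measure
      ((by fun_prop : Continuous fun p : E d × E d => ‖p.1‖ ^ 2 + ‖p.2‖ ^ 2).aestronglyMeasurable)
      hm.aemeasurable]
    have he : ((fun p : E d × E d => ‖p.1‖ ^ 2 + ‖p.2‖ ^ 2) ∘ fun x : E d => (x, (0 : E d)))
        = fun x : E d => ‖x‖ ^ 2 := by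
      funext x; simp
    rw [he]
    exact hμ.2

lemma expMap_zero_plan (μ : Measure (E d)) : expMap (μ.map (fun x => (x, (0 : E d)))) = μ := by
  rw [expMap, Measure.map_map (by fun_prop : Measurable fun p : E d × E d => p.1 + p.2) (by fun_prop)]
  have he : ((fun p : E d × E d => p.1 + p.2) ∘ fun x : E d => (x, (0 : E d))) = id := by
    funext x; simp
  rw [he, Measure.map_id]

lemma Lag_zero_plan {L : E d → ℝ} (hLc : Continuous L) (hL0 : L 0 = 0) (a : ℝ)
    (μ : Measure (E d)) : Lag L (scal a (μ.map (fun x => (x, (0 : E d))))) = 0 := by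
  have hA : AEStronglyMeasurable (fun p : E d × E d => L (a • p.2))
      (μ.map (fun x => (x, (0 : E d)))) :=
    (hLc.comp (by fun_prop : Continuous fun p : E d × E d => a • p.2)).aestronglyMeasurable
  rw [Lag_scal hLc,
    integral_map (by fun_prop : Measurable fun x : E d => (x, (0:E d))).aemeasurable hA]
  simp [hL0]

end Aux

section HLlemmas

variable {d : ℕ} {L : E d → ℝ} {G : Measure (E d) → ℝ} {T K c C C₂ : ℝ}

/-- Every element of the Hopf–Lax set is bounded below. -/
lemma HL_set_lower (hLc : Continuous L) (hc : 0 < c) (hC : 0 < C) (hC₂ : 0 < C₂)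
    (hcoer : ∀ z : E d, c * ‖z‖ ^ 2 - C ≤ L z) (hq : ∀ z : E d, L z ≤ C₂ * (1 + ‖z‖ ^ 2))
    (hK : 0 ≤ K) (hG : ∀ μ ∈ P2 d, ∀ ν ∈ P2 d, |G μ - G ν| ≤ K * W2 μ ν)
    {μ : Measure (E d)} (hμ : μ ∈ P2 d) {t : ℝ} (ht : 0 < T - t) :
    ∀ r ∈ {r | ∃ γ ∈ plans μ, r = G (expMap γ) + (T - t) * Lag L (scal (T - t)⁻¹ γ)},
      G μ - C * (T - t) - K ^ 2 * (T - t) / (4 * c) ≤ r := by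
  rintro r ⟨γ, hγ, rfl⟩
  haveI := hγ.1
  set s : ℝ := T - t with hs
  set N : ℝ := plNorm γ with hN
  have hN0 : 0 ≤ N := plNorm_nonneg γ
  -- G bound
  have hGb : G μ - K * N ≤ G (expMap γ) := by
    have h1 := hG μ hμ (expMap γ) (expMap_mem_P2 hγ)
    have h2 : W2 μ (expMap γ) ≤ N := W2_le_plNorm hγ.1 hγ.2.1
    have h3 : K * W2 μ (expMap γ) ≤ K * N := mul_le_mul_of_nonneg_left h2 hK
    have := (abs_le.1 h1).2
    linarith
  -- Lagrangian bound
  have hu : s * s⁻¹ = 1 := mul_inv_cancel₀ ht.ne'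
  have hLag : c * s⁻¹ ^ 2 * N ^ 2 - C ≤ Lag L (scal s⁻¹ γ) := by
    rw [Lag_scal hLc]
    have hpt : ∀ p : E d × E d, c * s⁻¹ ^ 2 * ‖p.2‖ ^ 2 - C ≤ L (s⁻¹ • p.2) := by
      intro p
      have := hcoer (s⁻¹ • p.2)
      have h2 : ‖s⁻¹ • p.2‖ ^ 2 = s⁻¹ ^ 2 * ‖p.2‖ ^ 2 := by
        rw [norm_smul, mul_pow, Real.norm_eq_abs, sq_abs]
      rw [h2] at this
      linarith [this]
    have hint1 : Integrable (fun p : E d × E d => c * s⁻¹ ^ 2 * ‖p.2‖ ^ 2 - C) γ :=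
      ((integrable_sq_snd hγ).const_mul _).sub (integrable_const C)
    have hint2 : Integrable (fun p : E d × E d => L (s⁻¹ • p.2)) γ :=
      integrable_L_smul hLc hc hC hC₂ hcoer hq _ hγ
    have := integral_mono hint1 hint2 hpt
    rw [integral_sub ((integrable_sq_snd hγ).const_mul _) (integrable_const C),
      integral_const_mul, integral_const, probReal_univ, one_smul,
      ← plNorm_sq] at this
    exact this
  -- combine
  have e3 : s * (c * s⁻¹ ^ 2 * N ^ 2 - C) = c * s⁻¹ * N ^ 2 - C * s := by
    field_simp
  have h5 : c * s⁻¹ * N ^ 2 - C * s ≤ s * Lag L (scal s⁻¹ γ) := by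
    rw [← e3]
    exact mul_le_mul_of_nonneg_left hLag ht.le
  have h6 : 0 ≤ c * s⁻¹ * N ^ 2 - K * N + K ^ 2 * s / (4 * c) := by
    have hq1 : (0:ℝ) ≤ s / (4 * c) * (2 * c * (s⁻¹ * N) - K) ^ 2 := by positivity
    have e4 : s / (4 * c) * (2 * c * (s⁻¹ * N) - K) ^ 2
        = c * (s * s⁻¹) * s⁻¹ * N ^ 2 - (s * s⁻¹) * K * N + K ^ 2 * s / (4 * c) := by
      field_simp
      ring
    rw [e4, hu] at hq1
    linarith [hq1]
  linarith [hGb, h5, h6]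

lemma HL_bddBelow (hLc : Continuous L) (hc : 0 < c) (hC : 0 < C) (hC₂ : 0 < C₂)
    (hcoer : ∀ z : E d, c * ‖z‖ ^ 2 - C ≤ L z) (hq : ∀ z : E d, L z ≤ C₂ * (1 + ‖z‖ ^ 2))
    (hK : 0 ≤ K) (hG : ∀ μ ∈ P2 d, ∀ ν ∈ P2 d, |G μ - G ν| ≤ K * W2 μ ν)
    {μ : Measure (E d)} (hμ : μ ∈ P2 d) {t : ℝ} (ht : 0 < T - t) :
    BddBelow {r | ∃ γ ∈ plans μ, r = G (expMap γ) + (T - t) * Lag L (scal (T - t)⁻¹ γ)} :=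
  ⟨_, HL_set_lower hLc hc hC hC₂ hcoer hq hK hG hμ ht⟩

lemma HL_le_of_mem (hLc : Continuous L) (hc : 0 < c) (hC : 0 < C) (hC₂ : 0 < C₂)
    (hcoer : ∀ z : E d, c * ‖z‖ ^ 2 - C ≤ L z) (hq : ∀ z : E d, L z ≤ C₂ * (1 + ‖z‖ ^ 2))
    (hK : 0 ≤ K) (hG : ∀ μ ∈ P2 d, ∀ ν ∈ P2 d, |G μ - G ν| ≤ K * W2 μ ν)
    {μ : Measure (E d)} (hμ : μ ∈ P2 d) {t : ℝ} (ht : 0 < T - t)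
    {γ : Measure (E d × E d)} (hγ : γ ∈ plans μ) :
    HL G L T t μ ≤ G (expMap γ) + (T - t) * Lag L (scal (T - t)⁻¹ γ) :=
  csInf_le (HL_bddBelow hLc hc hC hC₂ hcoer hq hK hG hμ ht) ⟨γ, hγ, rfl⟩

lemma HL_set_nonempty (hLc : Continuous L) (hL0 : L 0 = 0) {μ : Measure (E d)} (hμ : μ ∈ P2 d)
    (t : ℝ) :
    G μ ∈ {r | ∃ γ ∈ plans μ, r = G (expMap γ) + (T - t) * Lag L (scal (T - t)⁻¹ γ)} := by
  refine ⟨μ.map (fun x => (x, (0 : E d))), zero_plan_mem hμ, ?_⟩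
  rw [expMap_zero_plan, Lag_zero_plan hLc hL0, mul_zero, add_zero]

/-- Monotonicity in time of the Hopf–Lax function. -/
lemma HL_mono (hLconv : ConvexOn ℝ Set.univ L) (hLc : Continuous L) (hL0 : L 0 = 0)
    (hc : 0 < c) (hC : 0 < C) (hC₂ : 0 < C₂)
    (hcoer : ∀ z : E d, c * ‖z‖ ^ 2 - C ≤ L z) (hq : ∀ z : E d, L z ≤ C₂ * (1 + ‖z‖ ^ 2))
    (hK : 0 ≤ K) (hG : ∀ μ ∈ P2 d, ∀ ν ∈ P2 d, |G μ - G ν| ≤ K * W2 μ ν)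
    {μ : Measure (E d)} (hμ : μ ∈ P2 d) {t t' : ℝ} (htt' : t ≤ t') (ht' : 0 < T - t') :
    HL G L T t μ ≤ HL G L T t' μ := by
  have ht : 0 < T - t := by linarith
  refine le_csInf ⟨G μ, HL_set_nonempty hLc hL0 hμ t'⟩ ?_
  rintro r ⟨γ, hγ, rfl⟩
  haveI := hγ.1
  refine le_trans (HL_le_of_mem hLc hc hC hC₂ hcoer hq hK hG hμ ht hγ) ?_
  have key : (T - t) * Lag L (scal (T - t)⁻¹ γ) ≤ (T - t') * Lag L (scal (T - t')⁻¹ γ) := by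
    rw [Lag_scal hLc, Lag_scal hLc, ← integral_const_mul, ← integral_const_mul]
    refine integral_mono (((integrable_L_smul hLc hc hC hC₂ hcoer hq _ hγ).const_mul _))
      (((integrable_L_smul hLc hc hC hC₂ hcoer hq _ hγ).const_mul _)) ?_
    intro p
    -- pointwise convexity inequality
    set s : ℝ := T - t' with hs
    set s' : ℝ := T - t with hs'
    have hss' : s ≤ s' := by simp only [hs, hs']; linarith
    have hspos : 0 < s := ht'
    have hs'pos : 0 < s' := ht
    have ha : (0:ℝ) ≤ s / s' := by positivity
    have hb : (0:ℝ) ≤ 1 - s / s' := by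
      rw [sub_nonneg]
      exact (div_le_one hs'pos).2 hss'
    have hab : s / s' + (1 - s / s') = 1 := by ring
    have h := hLconv.2 (Set.mem_univ (s⁻¹ • p.2)) (Set.mem_univ (0 : E d)) ha hb hab
    have harg : (s / s') • (s⁻¹ • p.2) + (1 - s / s') • (0 : E d) = s'⁻¹ • p.2 := by
      rw [smul_zero, add_zero, smul_smul]
      congr 1
      field_simp
    rw [harg, hL0, smul_eq_mul, smul_eq_mul, mul_zero, add_zero] at h
    have h2 : s' * L (s'⁻¹ • p.2) ≤ s' * (s / s' * L (s⁻¹ • p.2)) :=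
      mul_le_mul_of_nonneg_left h hs'pos.le
    calc s' * L (s'⁻¹ • p.2) ≤ s' * (s / s' * L (s⁻¹ • p.2)) := h2
      _ = s * L (s⁻¹ • p.2) := by field_simp
  linarith

/-- Gluing lemma: given a coupling `π` of `μ` and `ν` and a plan `γ` over `ν`,
there is a plan `γ'` over `μ` with the same velocity marginal, together with a coupling
of the two pushforwards with cost equal to the cost of `π`. -/
lemma glue (π γ : Measure (E d × E d)) [IsProbabilityMeasure π] [IsProbabilityMeasure γ]
    (hm : γ.map Prod.fst = π.map Prod.snd) :
    ∃ γ' : Measure (E d × E d), IsProbabilityMeasure γ' ∧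
      γ'.map Prod.fst = π.map Prod.fst ∧ γ'.map Prod.snd = γ.map Prod.snd ∧
      ∃ PP : Measure (E d × E d), IsProbabilityMeasure PP ∧
        IsCoupling PP (expMap γ') (expMap γ) ∧
        ∫ p, ‖p.1 - p.2‖ ^ 2 ∂PP = ∫ p, ‖p.1 - p.2‖ ^ 2 ∂π := by
  set κ := γ.condKernel
  set θ : Measure ((E d × E d) × E d) := π ⊗ₘ (κ.comap Prod.snd measurable_snd) with hθ
  haveI : IsProbabilityMeasure θ := by rw [hθ]; infer_instance
  have hg : Measurable (fun q : (E d × E d) × E d => (q.1.2, q.2)) := by fun_prop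
  have hθg : θ.map (fun q => (q.1.2, q.2)) = γ := by
    have key : θ.map (fun q => (q.1.2, q.2)) = (π.map Prod.snd) ⊗ₘ κ := by
      ext s hs
      rw [Measure.map_apply hg hs, Measure.compProd_apply (hg hs), Measure.compProd_apply hs,
        lintegral_map (ProbabilityTheory.Kernel.measurable_kernel_prodMk_left hs) measurable_snd]
      rfl
    rw [key, ← hm]
    exact γ.disintegrate κ
  have hθfst : θ.map Prod.fst = π := Measure.fst_compProd π _
  set γ' : Measure (E d × E d) := θ.map (fun q => (q.1.1, q.2)) with hγ'
  have hγ'meas : Measurable (fun q : (E d × E d) × E d => (q.1.1, q.2)) := by fun_prop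
  refine ⟨γ', Measure.isProbabilityMeasure_map hγ'meas.aemeasurable, ?_, ?_, ?_⟩
  · rw [hγ', Measure.map_map measurable_fst hγ'meas, ← hθfst,
      Measure.map_map measurable_fst measurable_fst]
    rfl
  · rw [hγ', Measure.map_map measurable_snd hγ'meas, ← hθg,
      Measure.map_map measurable_snd hg]
    rfl
  · set PP : Measure (E d × E d) := θ.map (fun q => (q.1.1 + q.2, q.1.2 + q.2)) with hPP
    have hPPmeas : Measurable (fun q : (E d × E d) × E d => (q.1.1 + q.2, q.1.2 + q.2)) := by
      fun_prop
    have hadd : Measurable (fun p : E d × E d => p.1 + p.2) := measurable_fst.add measurable_snd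
    refine ⟨PP, Measure.isProbabilityMeasure_map hPPmeas.aemeasurable, ⟨?_, ?_⟩, ?_⟩
    · rw [hPP, Measure.map_map measurable_fst hPPmeas, expMap, hγ',
        Measure.map_map hadd hγ'meas]
      rfl
    · rw [hPP, Measure.map_map measurable_snd hPPmeas, expMap, ← hθg,
        Measure.map_map hadd hg]
      rfl
    · rw [hPP, integral_map hPPmeas.aemeasurable
        ((by fun_prop : Continuous fun p : E d × E d => ‖p.1 - p.2‖ ^ 2).aestronglyMeasurable)]
      have : ∀ q : (E d × E d) × E d,
          ‖(q.1.1 + q.2) - (q.1.2 + q.2)‖ ^ 2 = ‖q.1.1 - q.1.2‖ ^ 2 := by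
        intro q
        rw [add_sub_add_right_eq_sub]
      rw [integral_congr_ae (Filter.Eventually.of_forall this), ← hθfst,
        integral_map measurable_fst.aemeasurable
        ((by fun_prop : Continuous fun p : E d × E d => ‖p.1 - p.2‖ ^ 2).aestronglyMeasurable)]

set_option maxHeartbeats 1000000 in
/-- The Hopf–Lax function is `K`-Lipschitz in the measure variable. -/
lemma HL_lip (hLc : Continuous L) (hL0 : L 0 = 0) (hc : 0 < c) (hC : 0 < C) (hC₂ : 0 < C₂)
    (hcoer : ∀ z : E d, c * ‖z‖ ^ 2 - C ≤ L z) (hq : ∀ z : E d, L z ≤ C₂ * (1 + ‖z‖ ^ 2))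
    (hK : 0 ≤ K) (hG : ∀ μ ∈ P2 d, ∀ ν ∈ P2 d, |G μ - G ν| ≤ K * W2 μ ν)
    {μ ν : Measure (E d)} (hμ : μ ∈ P2 d) (hν : ν ∈ P2 d) {t : ℝ} (ht : 0 < T - t) :
    HL G L T t μ ≤ HL G L T t ν + K * W2 μ ν := by
  haveI := hμ.1
  haveI := hν.1
  -- step 1: for any coupling π of μ and ν, HL μ ≤ HL ν + K * cost(π)
  have step : ∀ π : Measure (E d × E d), IsProbabilityMeasure π → IsCoupling π μ ν →
      HL G L T t μ ≤ HL G L T t ν + K * Real.sqrt (∫ p, ‖p.1 - p.2‖ ^ 2 ∂π) := by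
    intro π hπ hπc
    haveI := hπ
    have : ∀ r ∈ {r | ∃ γ ∈ plans ν, r = G (expMap γ) + (T - t) * Lag L (scal (T - t)⁻¹ γ)},
        HL G L T t μ - K * Real.sqrt (∫ p, ‖p.1 - p.2‖ ^ 2 ∂π) ≤ r := by
      rintro r ⟨γ, hγ, rfl⟩
      haveI := hγ.1
      have hmm : γ.map Prod.fst = π.map Prod.snd := by rw [hγ.2.1, hπc.2]
      obtain ⟨γ', hγ'p, hγ'fst, hγ'snd, PP, hPPp, hPPc, hPPcost⟩ := glue π γ hmm
      have hγ'fst' : γ'.map Prod.fst = μ := by rw [hγ'fst, hπc.1]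
      -- γ' is a plan over μ
      have hγ'mem : γ' ∈ plans μ := by
        refine ⟨hγ'p, hγ'fst', ?_⟩
        have h1 : Integrable (fun p : E d × E d => ‖p.1‖ ^ 2) γ' := by
          have := hμ.2
          rw [← hγ'fst'] at this
          have := (integrable_map_measure ((continuous_norm.pow 2).aestronglyMeasurable)
            measurable_fst.aemeasurable).1 this
          simpa [Function.comp_def] using this
        have h2 : Integrable (fun p : E d × E d => ‖p.2‖ ^ 2) γ' := by
          have hbase : Integrable (fun z : E d => ‖z‖ ^ 2) (γ.map Prod.snd) := by
            rw [integrable_map_measure ((by fun_prop : Continuous fun x : E d => ‖x‖ ^ 2).aestronglyMeasurable)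
              measurable_snd.aemeasurable]
            simpa [Function.comp_def] using integrable_sq_snd hγ
          rw [← hγ'snd] at hbase
          have := (integrable_map_measure ((continuous_norm.pow 2).aestronglyMeasurable)
            measurable_snd.aemeasurable).1 hbase
          simpa [Function.comp_def] using this
        exact h1.add h2
      -- compare the G values
      have hGdiff : G (expMap γ') ≤ G (expMap γ)
          + K * Real.sqrt (∫ p, ‖p.1 - p.2‖ ^ 2 ∂π) := by
        have h1 := hG (expMap γ') (expMap_mem_P2 hγ'mem) (expMap γ) (expMap_mem_P2 hγ)
        have h2 : W2 (expMap γ') (expMap γ) ≤ Real.sqrt (∫ p, ‖p.1 - p.2‖ ^ 2 ∂π) := by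
          rw [← hPPcost]
          exact W2_le_cost PP hPPp hPPc
        have h3 := mul_le_mul_of_nonneg_left h2 hK
        have := (abs_le.1 h1).2
        linarith
      have hLageq : Lag L (scal (T - t)⁻¹ γ') = Lag L (scal (T - t)⁻¹ γ) :=
        Lag_scal_congr hLc _ hγ'snd
      have hHLle := HL_le_of_mem hLc hc hC hC₂ hcoer hq hK hG hμ ht hγ'mem
      rw [hLageq] at hHLle
      linarith
    have hle : HL G L T t μ - K * Real.sqrt (∫ p, ‖p.1 - p.2‖ ^ 2 ∂π) ≤ HL G L T t ν :=
      le_csInf ⟨G ν, HL_set_nonempty hLc hL0 hν t⟩ this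
    linarith
  -- step 2: pass to the infimum over couplings
  have hprod : IsProbabilityMeasure (μ.prod ν) := by infer_instance
  have hprodc : IsCoupling (μ.prod ν) μ ν := by
    constructor
    · rw [show (μ.prod ν).map Prod.fst = (μ.prod ν).fst from rfl, Measure.fst_prod]
    · rw [show (μ.prod ν).map Prod.snd = (μ.prod ν).snd from rfl, Measure.snd_prod]
  set S := {c | ∃ γ : Measure (E d × E d), IsProbabilityMeasure γ ∧ IsCoupling γ μ ν ∧
    c = Real.sqrt (∫ p, ‖p.1 - p.2‖ ^ 2 ∂γ)} with hS
  have hSne : S.Nonempty := ⟨_, μ.prod ν, hprod, hprodc, rfl⟩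
  have hstep' : ∀ a ∈ S, HL G L T t μ ≤ HL G L T t ν + K * a := by
    rintro a ⟨π, hπ, hπc, rfl⟩
    exact step π hπ hπc
  rcases eq_or_lt_of_le hK with hK0 | hKpos
  · obtain ⟨a, ha⟩ := hSne
    have := hstep' a ha
    rw [← hK0] at this ⊢
    simpa using this
  · have h1 : (HL G L T t μ - HL G L T t ν) / K ≤ sInf S := by
      refine le_csInf hSne ?_
      intro a ha
      rw [div_le_iff₀ hKpos]
      have := hstep' a ha
      linarith [mul_comm K a]
    have h2 : HL G L T t μ - HL G L T t ν ≤ W2 μ ν * K := by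
      rw [← div_le_iff₀ hKpos]
      exact h1
    rw [mul_comm] at h2
    linarith

end HLlemmas

set_option maxHeartbeats 2000000 in
theorem hopf_lax_eps_optimizer_small {d : ℕ} (L : E d → ℝ) (G : Measure (E d) → ℝ)
    (T K c C : ℝ)
    (hLconv : ConvexOn ℝ Set.univ L) (hL0 : L 0 = 0)
    (hsuper : ∀ M : ℝ, ∃ R : ℝ, ∀ z : E d, R ≤ ‖z‖ → M * ‖z‖ ≤ L z)
    (hquad : ∃ C' > 0, ∀ z : E d, L z ≤ C' * (1 + ‖z‖ ^ 2))
    (hc : 0 < c) (hC : 0 < C)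
    (hcoer : ∀ z : E d, c * ‖z‖ ^ 2 - C ≤ L z)
    (hK : 0 ≤ K)
    (hG : ∀ μ ∈ P2 d, ∀ ν ∈ P2 d, |G μ - G ν| ≤ K * W2 μ ν) :
    ∃ C' > 0, ∀ (t h ε : ℝ) (μ : Measure (E d)) (ξ : Measure (E d × E d)),
      0 < t → 0 < h → t + h < T → 0 < ε → μ ∈ P2 d → ξ ∈ plans μ →
      HL G L T (t + h) (expMap ξ) + h * Lag L (scal h⁻¹ ξ) ≤ HL G L T t μ + ε →
      plNorm ξ ≤ C' * (h + Real.sqrt (ε * h)) := by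
  obtain ⟨C₂, hC₂, hq⟩ := hquad
  have hLc : Continuous L := by
    rw [← continuousOn_univ]
    exact hLconv.continuousOn isOpen_univ
  refine ⟨K / c + Real.sqrt (C / c) + 1 / Real.sqrt c + 1, by positivity, ?_⟩
  intro t h ε μ ξ ht hh hthT hε hμ hξ hopt
  haveI := hμ.1
  haveI := hξ.1
  set N : ℝ := plNorm ξ with hNdef
  have hN0 : 0 ≤ N := plNorm_nonneg ξ
  have hsT : 0 < T - (t + h) := by linarith
  have hexpP2 : expMap ξ ∈ P2 d := expMap_mem_P2 hξ
  -- Step 1: DPP upper bound: HL t μ ≤ HL (t+h) (expMap ξ) + K * N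
  have step1 : HL G L T t μ ≤ HL G L T (t + h) (expMap ξ) + K * N := by
    have h1 : HL G L T t μ ≤ HL G L T (t + h) μ :=
      HL_mono hLconv hLc hL0 hc hC hC₂ hcoer hq hK hG hμ (by linarith) hsT
    have h2 : HL G L T (t + h) μ ≤ HL G L T (t + h) (expMap ξ) + K * W2 μ (expMap ξ) :=
      HL_lip hLc hL0 hc hC hC₂ hcoer hq hK hG hμ hexpP2 hsT
    have h3 : W2 μ (expMap ξ) ≤ N := W2_le_plNorm hξ.1 hξ.2.1
    have h4 : K * W2 μ (expMap ξ) ≤ K * N := mul_le_mul_of_nonneg_left h3 hK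
    linarith
  -- Step 2: h * Lag ≤ K * N + ε
  have step2 : h * Lag L (scal h⁻¹ ξ) ≤ K * N + ε := by linarith
  -- Step 3: coercivity
  have hu : h * h⁻¹ = 1 := mul_inv_cancel₀ hh.ne'
  have step3 : c * h⁻¹ ^ 2 * N ^ 2 - C ≤ Lag L (scal h⁻¹ ξ) := by
    rw [Lag_scal hLc]
    have hpt : ∀ p : E d × E d, c * h⁻¹ ^ 2 * ‖p.2‖ ^ 2 - C ≤ L (h⁻¹ • p.2) := by
      intro p
      have := hcoer (h⁻¹ • p.2)
      have h2 : ‖h⁻¹ • p.2‖ ^ 2 = h⁻¹ ^ 2 * ‖p.2‖ ^ 2 := by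
        rw [norm_smul, mul_pow, Real.norm_eq_abs, sq_abs]
      rw [h2] at this
      linarith
    have hint1 : Integrable (fun p : E d × E d => c * h⁻¹ ^ 2 * ‖p.2‖ ^ 2 - C) ξ :=
      ((integrable_sq_snd hξ).const_mul _).sub (integrable_const C)
    have hint2 : Integrable (fun p : E d × E d => L (h⁻¹ • p.2)) ξ :=
      integrable_L_smul hLc hc hC hC₂ hcoer hq _ hξ
    have := integral_mono hint1 hint2 hpt
    rw [integral_sub ((integrable_sq_snd hξ).const_mul _) (integrable_const C),
      integral_const_mul, integral_const, probReal_univ, one_smul,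
      ← plNorm_sq] at this
    exact this
  -- Step 4: quadratic inequality  c N² ≤ K h N + ε h + C h²
  have step4 : c * N ^ 2 ≤ K * h * N + ε * h + C * h ^ 2 := by
    have h1 : h * (c * h⁻¹ ^ 2 * N ^ 2 - C) ≤ K * N + ε :=
      le_trans (mul_le_mul_of_nonneg_left step3 hh.le) step2
    have h2 : h * (h * (c * h⁻¹ ^ 2 * N ^ 2 - C)) ≤ h * (K * N + ε) :=
      mul_le_mul_of_nonneg_left h1 hh.le
    have e : h * (h * (c * h⁻¹ ^ 2 * N ^ 2 - C)) = c * N ^ 2 - C * h ^ 2 := by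
      field_simp
    rw [e] at h2
    nlinarith [h2]
  -- Step 5: solve the quadratic inequality
  set A : ℝ := K / c * h with hA
  set B : ℝ := Real.sqrt ((ε * h + C * h ^ 2) / c) with hB
  have hA0 : 0 ≤ A := by positivity
  have hB0 : 0 ≤ B := Real.sqrt_nonneg _
  have hB2 : B ^ 2 = (ε * h + C * h ^ 2) / c := Real.sq_sqrt (by positivity)
  have hB2c : c * B ^ 2 = ε * h + C * h ^ 2 := by
    rw [hB2]; field_simp
  have hAc : c * A = K * h := by rw [hA]; field_simp
  have hNle : N ≤ A + B := by
    by_contra hcon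
    push_neg at hcon
    have e2 : c * (A * N + B ^ 2) = K * h * N + (ε * h + C * h ^ 2) := by
      rw [mul_add, hB2c, ← hAc]
      ring
    have key' : c * N ^ 2 ≤ c * (A * N + B ^ 2) := by
      rw [e2]
      linarith [step4]
    have key : N ^ 2 ≤ A * N + B ^ 2 := le_of_mul_le_mul_left key' hc
    nlinarith [key, hcon, hA0, hB0, hN0]
  -- Step 6: bound A + B by the final expression
  have hBsplit : B ≤ Real.sqrt (ε * h) / Real.sqrt c + Real.sqrt (C / c) * h := by
    have h1 : B = Real.sqrt (ε * h / c + C / c * h ^ 2) := by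
      rw [hB]; congr 1; ring
    have h2 : Real.sqrt (ε * h / c + C / c * h ^ 2)
        ≤ Real.sqrt (ε * h / c) + Real.sqrt (C / c * h ^ 2) := by
      have hx : (0:ℝ) ≤ ε * h / c := by positivity
      have hy : (0:ℝ) ≤ C / c * h ^ 2 := by positivity
      have : ε * h / c + C / c * h ^ 2
          ≤ (Real.sqrt (ε * h / c) + Real.sqrt (C / c * h ^ 2)) ^ 2 := by
        rw [add_sq, Real.sq_sqrt hx, Real.sq_sqrt hy]
        nlinarith [mul_nonneg (Real.sqrt_nonneg (ε * h / c)) (Real.sqrt_nonneg (C / c * h ^ 2))]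
      calc Real.sqrt (ε * h / c + C / c * h ^ 2)
          ≤ Real.sqrt ((Real.sqrt (ε * h / c) + Real.sqrt (C / c * h ^ 2)) ^ 2) :=
            Real.sqrt_le_sqrt this
        _ = Real.sqrt (ε * h / c) + Real.sqrt (C / c * h ^ 2) :=
            Real.sqrt_sq (by positivity)
    have h3 : Real.sqrt (ε * h / c) = Real.sqrt (ε * h) / Real.sqrt c :=
      Real.sqrt_div (by positivity) c
    have h4 : Real.sqrt (C / c * h ^ 2) = Real.sqrt (C / c) * h := by
      rw [Real.sqrt_mul (by positivity), Real.sqrt_sq hh.le]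
    rw [h1]
    calc Real.sqrt (ε * h / c + C / c * h ^ 2)
        ≤ Real.sqrt (ε * h / c) + Real.sqrt (C / c * h ^ 2) := h2
      _ = Real.sqrt (ε * h) / Real.sqrt c + Real.sqrt (C / c) * h := by rw [h3, h4]
  have hsqc : 0 < Real.sqrt c := Real.sqrt_pos.2 hc
  have hεh0 : 0 ≤ Real.sqrt (ε * h) := Real.sqrt_nonneg _
  calc N ≤ A + B := hNle
    _ ≤ K / c * h + (Real.sqrt (ε * h) / Real.sqrt c + Real.sqrt (C / c) * h) := by
        rw [hA]
        linarith [hBsplit]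
    _ ≤ (K / c + Real.sqrt (C / c) + 1 / Real.sqrt c + 1) * (h + Real.sqrt (ε * h)) := by
        have e1 : Real.sqrt (ε * h) / Real.sqrt c = (1 / Real.sqrt c) * Real.sqrt (ε * h) := by
          ring
        rw [e1]
        have t1 : K / c * h ≤ (K / c) * (h + Real.sqrt (ε * h)) := by
          nlinarith [div_nonneg hK hc.le, hεh0]
        have t2 : Real.sqrt (C / c) * h ≤ Real.sqrt (C / c) * (h + Real.sqrt (ε * h)) := by
          nlinarith [Real.sqrt_nonneg (C / c)]
        have t3 : (1 / Real.sqrt c) * Real.sqrt (ε * h)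
            ≤ (1 / Real.sqrt c) * (h + Real.sqrt (ε * h)) := by
          have h0 : (0:ℝ) ≤ 1 / Real.sqrt c := by positivity
          nlinarith [hh.le, h0]
        have t4 : (0:ℝ) ≤ 1 * (h + Real.sqrt (ε * h)) := by positivity
        nlinarith [t1, t2, t3, t4]
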